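/- Suppose X has exactly two elements. A decision-conflict logit ρ on X is a dual logit if and only if it satisfies axiom A5: for the two distinct elements a, b of X, ρ(o,{a,b})/(2·ρ(a,{a,b})) ≥ 2·ρ(b,{a,b})/ρ(o,{a,b}) (equivalently, ρ(o,{a,b})² ≥ 4·ρ(a,{a,b})·ρ(b,{a,b})). -/

import Mathlib

open Finset

variable {X : Type*} [Fintype X] [DecidableEq X]

/-- The probability of choosing the outside option (deferring) at menu `A`. -/
noncomputable def defer (ρ : Finset X → X → ℝ) (A : Finset X) : ℝ :=
  1 - ∑ a ∈ A, ρ A a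

/-- `ρ` is a random non-forced choice model on `X`. -/
def IsRNFC (ρ : Finset X → X → ℝ) : Prop :=
  ∀ A : Finset X, A.Nonempty →
    (∀ a ∈ A, 0 ≤ ρ A a ∧ ρ A a ≤ 1) ∧
    (∀ a, a ∉ A → ρ A a = 0) ∧
    (∑ a ∈ A, ρ A a) ≤ 1

/-- `ρ` is a decision-conflict logit with representation `(u, D)`. -/
def IsDCL (ρ : Finset X → X → ℝ) (u : X → ℝ) (D : Finset X → ℝ) : Prop :=
  (∀ a, 0 < u a) ∧
  (∀ A : Finset X, A.Nonempty → 0 ≤ D A ∧ (D A = 0 ↔ A.card = 1)) ∧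
  (∀ A : Finset X, A.Nonempty → ∀ a ∈ A, ρ A a = u a / ((∑ b ∈ A, u b) + D A))

/-- `ρ` is a dual logit. -/
def IsDualLogit (ρ : Finset X → X → ℝ) : Prop :=
  ∃ v₁ v₂ : X → ℝ, (∀ a, 0 < v₁ a) ∧ (∀ a, 0 < v₂ a) ∧
    ∀ A : Finset X, A.Nonempty → ∀ a ∈ A,
      ρ A a = (v₁ a / ∑ b ∈ A, v₁ b) * (v₂ a / ∑ b ∈ A, v₂ b)

set_option maxHeartbeats 1000000 in
/-- When `X` has exactly two elements, a decision-conflict logit is a dual logit iff it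
satisfies Axiom A5 (Constrained Odds Symmetry). -/
theorem stmt10 (hX : Fintype.card X = 2) (ρ : Finset X → X → ℝ) (hρ : IsRNFC ρ)
    (u : X → ℝ) (D : Finset X → ℝ) (h : IsDCL ρ u D) :
    IsDualLogit ρ ↔
      ∀ a b : X, a ≠ b →
        defer ρ {a, b} / (2 * ρ {a, b} a) ≥ 2 * ρ {a, b} b / defer ρ {a, b} := by

  obtain ⟨hu, hD, hρf⟩ := h
  -- basic facts about a two-element menu
  have key : ∀ a b : X, a ≠ b →
      ρ {a, b} a = u a / (u a + u b + D {a, b}) ∧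
      ρ {a, b} b = u b / (u a + u b + D {a, b}) ∧
      defer ρ {a, b} = D {a, b} / (u a + u b + D {a, b}) ∧
      0 < D {a, b} ∧ 0 < u a + u b + D {a, b} := by
    intro a b hab
    have hne : ({a, b} : Finset X).Nonempty := ⟨a, by simp⟩
    have hcard : ({a, b} : Finset X).card = 2 := Finset.card_pair hab
    have hDpos : 0 < D {a, b} := by
      rcases hD {a, b} hne with ⟨h0, h1⟩
      rcases h0.lt_or_eq with h | h
      · exact h
      · exact absurd (h1.mp h.symm) (by omega)
    have hsumu : (∑ c ∈ ({a, b} : Finset X), u c) = u a + u b := Finset.sum_pair hab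
    have hSpos : 0 < u a + u b + D {a, b} := by
      have := hu a; have := hu b; linarith
    have hpa : ρ {a, b} a = u a / (u a + u b + D {a, b}) := by
      rw [hρf {a, b} hne a (by simp), hsumu]
    have hpb : ρ {a, b} b = u b / (u a + u b + D {a, b}) := by
      rw [hρf {a, b} hne b (by simp), hsumu]
    refine ⟨hpa, hpb, ?_, hDpos, hSpos⟩
    rw [defer, Finset.sum_pair hab, hpa, hpb]
    field_simp; ring
  constructor
  · rintro ⟨v₁, v₂, hv₁, hv₂, hv⟩ a b hab
    obtain ⟨hpa, hpb, ho, hDpos, hSpos⟩ := key a b hab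
    have hne : ({a, b} : Finset X).Nonempty := ⟨a, by simp⟩
    have hopos : 0 < defer ρ {a, b} := by rw [ho]; positivity
    have hppos : 0 < ρ {a, b} a := by rw [hpa]; have := hu a; positivity
    have hsum1 : (∑ c ∈ ({a, b} : Finset X), v₁ c) = v₁ a + v₁ b := Finset.sum_pair hab
    have hsum2 : (∑ c ∈ ({a, b} : Finset X), v₂ c) = v₂ a + v₂ b := Finset.sum_pair hab
    have hV1 : 0 < v₁ a + v₁ b := by have := hv₁ a; have := hv₁ b; linarith
    have hV2 : 0 < v₂ a + v₂ b := by have := hv₂ a; have := hv₂ b; linarith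
    set x := v₁ a / (v₁ a + v₁ b) with hx
    set y := v₂ a / (v₂ a + v₂ b) with hy
    have hqa : ρ {a, b} a = x * y := by
      rw [hv {a, b} hne a (by simp), hsum1, hsum2]
    have hqb : ρ {a, b} b = (1 - x) * (1 - y) := by
      rw [hv {a, b} hne b (by simp), hsum1, hsum2]
      have e1 : v₁ b / (v₁ a + v₁ b) = 1 - x := by rw [hx]; field_simp; ring
      have e2 : v₂ b / (v₂ a + v₂ b) = 1 - y := by rw [hy]; field_simp; ring
      rw [e1, e2]
    have hod : defer ρ {a, b} = 1 - x * y - (1 - x) * (1 - y) := by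
      rw [defer, Finset.sum_pair hab, hqa, hqb]; ring
    rw [ge_iff_le, div_le_div_iff₀ hopos (by linarith : (0:ℝ) < 2 * ρ {a, b} a)]
    rw [hqa, hqb, hod]
    nlinarith [sq_nonneg (x - y)]
  · intro hA5
    have huniv : ∃ a b : X, a ≠ b ∧ (Finset.univ : Finset X) = {a, b} := by
      have := (Finset.card_eq_two (s := (Finset.univ : Finset X))).mp (by simpa using hX)
      exact this
    obtain ⟨a, b, hab, huniv⟩ := huniv
    obtain ⟨hpa, hpb, ho, hDpos, hSpos⟩ := key a b hab
    set S := u a + u b + D {a, b} with hSdef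
    set p := u a / S with hp
    set q := u b / S with hq
    set o := D {a, b} / S with hoo
    clear_value S p q o
    have hppos : 0 < p := by rw [hp]; have := hu a; positivity
    have hqpos : 0 < q := by rw [hq]; have := hu b; positivity
    have hopos : 0 < o := by rw [hoo]; positivity
    have hsum : p + q + o = 1 := by
      rw [hp, hq, hoo]; field_simp; linarith [hSdef]
    have hq1 : q < 1 := by linarith
    have hp1 : p < 1 := by linarith
    -- from A5: o^2 ≥ 4 p q
    have hineq : 4 * p * q ≤ o ^ 2 := by
      have h5 := hA5 a b hab
      rw [ge_iff_le, ho, hpa, hpb,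
        div_le_div_iff₀ hopos (by linarith : (0:ℝ) < 2 * p)] at h5
      nlinarith [h5]
    set s := 1 + p - q with hs
    set Δ := s ^ 2 - 4 * p with hΔ
    clear_value s Δ
    have hΔo : Δ = o ^ 2 - 4 * p * q := by rw [hΔ, hs]; nlinarith [hsum]
    have hΔ0 : 0 ≤ Δ := by rw [hΔo]; linarith
    set r := Real.sqrt Δ with hr
    clear_value r
    have hr0 : 0 ≤ r := by rw [hr]; exact Real.sqrt_nonneg _
    have hr2 : r ^ 2 = Δ := by rw [hr]; exact Real.sq_sqrt hΔ0
    have hspos : 0 < s := by rw [hs]; linarith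
    have hrs : r < s := by
      rw [hr]; rw [Real.sqrt_lt' hspos]; rw [hΔ]; linarith
    have hr2s : r < 2 - s := by
      rw [hr]; rw [Real.sqrt_lt' (by rw [hs]; linarith : (0:ℝ) < 2 - s)]
      rw [hΔ, hs]; nlinarith
    set x := (s + r) / 2 with hx
    set y := (s - r) / 2 with hy
    clear_value x y
    have hy0 : 0 < y := by rw [hy]; linarith
    have hx1 : x < 1 := by rw [hx]; linarith
    have hx0 : 0 < x := by rw [hx]; linarith
    have hy1 : y < 1 := by rw [hy]; linarith
    have hxyp : x * y = p := by
      have : x * y = (s ^ 2 - r ^ 2) / 4 := by rw [hx, hy]; ring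
      rw [this, hr2, hΔ]; ring
    have hxyq : (1 - x) * (1 - y) = q := by
      have hxys : x + y = s := by rw [hx, hy]; ring
      have : (1 - x) * (1 - y) = 1 - (x + y) + x * y := by ring
      rw [this, hxys, hxyp, hs]; ring
    refine ⟨(fun c => if c = a then x else 1 - x), (fun c => if c = a then y else 1 - y),
      ?_, ?_, ?_⟩
    · intro c; dsimp only; by_cases hc : c = a
      · rw [if_pos hc]; linarith
      · rw [if_neg hc]; linarith
    · intro c; dsimp only; by_cases hc : c = a
      · rw [if_pos hc]; linarith
      · rw [if_neg hc]; linarith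
    · intro A hAne c hc
      have hsub : A ⊆ {a, b} := huniv ▸ A.subset_univ
      have hba : b ≠ a := hab.symm
      have hsingle : ∀ d : X, ρ {d} d = 1 := by
        intro d
        have hne : ({d} : Finset X).Nonempty := ⟨d, by simp⟩
        have hD0 : D {d} = 0 := (hD {d} hne).2.mpr (by simp)
        rw [hρf {d} hne d (by simp), Finset.sum_singleton, hD0, add_zero]
        exact div_self (ne_of_gt (hu d))
      by_cases haA : a ∈ A <;> by_cases hbA : b ∈ A
      · -- A = {a, b}
        have hA : A = {a, b} := by
          apply Finset.Subset.antisymm hsub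
          intro z hz
          simp only [Finset.mem_insert, Finset.mem_singleton] at hz
          rcases hz with rfl | rfl <;> assumption
        subst hA
        have hs1 : (∑ d ∈ ({a, b} : Finset X), (if d = a then x else 1 - x)) = 1 := by
          rw [Finset.sum_pair hab, if_pos rfl, if_neg hba]; ring
        have hs2 : (∑ d ∈ ({a, b} : Finset X), (if d = a then y else 1 - y)) = 1 := by
          rw [Finset.sum_pair hab, if_pos rfl, if_neg hba]; ring
        rw [hs1, hs2]
        simp only [Finset.mem_insert, Finset.mem_singleton] at hc
        rcases hc with rfl | rfl
        · simp only [if_pos rfl, if_true, ite_true, div_one, hpa]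
          linarith [hxyp]
        · simp only [if_neg hba, div_one, hpb]
          linarith [hxyq]
      · -- A = {a}
        have hA : A = {a} := by
          apply Finset.Subset.antisymm _ (Finset.singleton_subset_iff.mpr haA)
          intro z hz
          have hz2 := hsub hz
          simp only [Finset.mem_insert, Finset.mem_singleton] at hz2 ⊢
          rcases hz2 with rfl | rfl
          · rfl
          · exact absurd hz hbA
        subst hA
        simp only [Finset.mem_singleton] at hc; subst hc
        rw [hsingle c, Finset.sum_singleton, Finset.sum_singleton]
        simp [ne_of_gt hx0, ne_of_gt hy0]
      · -- A = {b}
        have hA : A = {b} := by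
          apply Finset.Subset.antisymm _ (Finset.singleton_subset_iff.mpr hbA)
          intro z hz
          have hz2 := hsub hz
          simp only [Finset.mem_insert, Finset.mem_singleton] at hz2 ⊢
          rcases hz2 with rfl | rfl
          · exact absurd hz haA
          · rfl
        subst hA
        simp only [Finset.mem_singleton] at hc; subst hc
        rw [hsingle c, Finset.sum_singleton, Finset.sum_singleton]
        have hx' : (1:ℝ) - x ≠ 0 := ne_of_gt (by linarith)
        have hy' : (1:ℝ) - y ≠ 0 := ne_of_gt (by linarith)
        simp [hba, hx', hy']
      · -- impossible
        obtain ⟨z, hz⟩ := hAne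
        have hz2 := hsub hz
        simp only [Finset.mem_insert, Finset.mem_singleton] at hz2
        rcases hz2 with rfl | rfl
        · exact absurd hz haA
        · exact absurd hz hbA
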